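/- arXiv:1305.1240 — 5 statements merged into one kernel-verified Lean document; each statement's English description precedes it below -/
import Mathlib

section
/- Let α, β, δ > 0 with β < α and δ ≥ α. Set x₁ = 0, x₂ = β, and H(x) = −x log x − (α − x) log(α − x) − (β − x) log(β − x) − (δ − α + x) log(δ − α + x) (with 0 log 0 = 0). Then H(x₁) − H(x₂) = f_δ(α − β) − f_δ(α), where f_δ(x) = x log x + (δ − x) log(δ − x). Hence H(0) < H(β) if and only if |α − δ/2| > |α − β − δ/2|. -/
/-- The entropy function `H` of the four block probabilities
`x, α−x, β−x, δ−α+x` (natural log; `Real.log 0 = 0`, so `0 log 0 = 0`). -/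
noncomputable def Hent (α β δ x : ℝ) : ℝ :=
  -(x * Real.log x) - ((α - x) * Real.log (α - x))
    - ((β - x) * Real.log (β - x)) - ((δ - α + x) * Real.log (δ - α + x))

private noncomputable def Fent (δ x : ℝ) : ℝ :=
  x * Real.log x + (δ - x) * Real.log (δ - x)

private lemma Fent_cont (δ : ℝ) : Continuous (Fent δ) := by
  unfold Fent
  exact Real.continuous_mul_log.add
    (Real.continuous_mul_log.comp (continuous_const.sub continuous_id))

private lemma Fent_symm (δ x : ℝ) : Fent δ (δ - x) = Fent δ x := by
  unfold Fent
  rw [sub_sub_cancel]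
  ring

private lemma Fent_mono (δ : ℝ) (hδ : 0 < δ) :
    StrictMonoOn (Fent δ) (Set.Icc (δ/2) δ) := by
  apply strictMonoOn_of_deriv_pos (convex_Icc _ _) ((Fent_cont δ).continuousOn)
  intro x hx
  rw [interior_Icc] at hx
  have hx0 : 0 < x := lt_trans (half_pos hδ) hx.1
  have hdx : 0 < δ - x := sub_pos.2 hx.2
  have h1 : HasDerivAt (fun y => y * Real.log y) (Real.log x + 1) x :=
    Real.hasDerivAt_mul_log hx0.ne'
  have h2 : HasDerivAt (fun y : ℝ => (δ - y) * Real.log (δ - y))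
      ((Real.log (δ - x) + 1) * (0 - 1)) x := by
    exact (Real.hasDerivAt_mul_log hdx.ne').comp x
      ((hasDerivAt_const x δ).sub (hasDerivAt_id x))
  have h3 : HasDerivAt (Fent δ) ((Real.log x + 1) + (Real.log (δ - x) + 1) * (0 - 1)) x :=
    h1.add h2
  rw [h3.deriv]
  have : Real.log (δ - x) < Real.log x := Real.log_lt_log hdx (by linarith [hx.1])
  linarith

private lemma Fent_key (δ : ℝ) (hδ : 0 < δ) (u v : ℝ)
    (hu : u ∈ Set.Icc (0:ℝ) δ) (hv : v ∈ Set.Icc (0:ℝ) δ) :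
    Fent δ u < Fent δ v ↔ |u - δ/2| < |v - δ/2| := by
  have reflect : ∀ w, w ∈ Set.Icc (0:ℝ) δ →
      (δ/2 + |w - δ/2|) ∈ Set.Icc (δ/2) δ ∧ Fent δ (δ/2 + |w - δ/2|) = Fent δ w := by
    intro w hw
    rcases le_or_gt (δ/2) w with h | h
    · rw [abs_of_nonneg (by linarith)]
      constructor
      · constructor <;> [linarith; linarith [hw.2]]
      · norm_num
    · rw [abs_of_neg (by linarith)]
      constructor
      · constructor <;> [linarith; linarith [hw.1]]
      · have : δ/2 + -(w - δ/2) = δ - w := by ring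
        rw [this, Fent_symm]
  obtain ⟨hu', hFu⟩ := reflect u hu
  obtain ⟨hv', hFv⟩ := reflect v hv
  rw [← hFu, ← hFv, (Fent_mono δ hδ).lt_iff_lt hu' hv', add_lt_add_iff_left]

/-- Case 2: `β < α`, `δ ≥ α`, endpoints `x₁ = 0`, `x₂ = β`.
Then `H(0) − H(β) = f_δ(α−β) − f_δ(α)` where `f_δ(x) = x log x + (δ−x) log(δ−x)`,
and `H(0) < H(β)` iff `|α − δ/2| > |α − β − δ/2|`. -/
theorem stmt7
    (α β δ : ℝ)
    (hα : α ∈ Set.Ioo (0:ℝ) 1) (hβ : β ∈ Set.Ioo (0:ℝ) 1) (hδ : δ ∈ Set.Ioo (0:ℝ) 1)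
    (hβα : β < α) (hαδ : α ≤ δ) (hδ1 : δ ≤ 1 - β) :
    Hent α β δ 0 - Hent α β δ β
        = ((α - β) * Real.log (α - β) + (δ - (α - β)) * Real.log (δ - (α - β)))
          - (α * Real.log α + (δ - α) * Real.log (δ - α)) ∧
    (Hent α β δ 0 < Hent α β δ β ↔ |α - δ / 2| > |α - β - δ / 2|) := by
  have heq : Hent α β δ 0 - Hent α β δ β
      = Fent δ (α - β) - Fent δ α := by
    simp only [Hent, Fent, sub_zero, add_zero, sub_self, zero_mul, mul_zero]
    have h1 : δ - α + β = δ - (α - β) := by ring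
    rw [h1]
    ring
  have hδ0 : (0:ℝ) < δ := hδ.1
  have hmem1 : α - β ∈ Set.Icc (0:ℝ) δ :=
    ⟨by linarith, by linarith [hβ.1]⟩
  have hmem2 : α ∈ Set.Icc (0:ℝ) δ := ⟨le_of_lt hα.1, hαδ⟩
  have hkey := Fent_key δ hδ0 (α - β) α hmem1 hmem2
  constructor
  · rw [heq]; simp [Fent]
  · constructor
    · intro h
      have : Fent δ (α - β) < Fent δ α := by linarith [heq, sub_lt_zero.mpr h]
      have := hkey.mp this
      have e : α - β - δ/2 = (α - β) - δ/2 := by ring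
      rw [gt_iff_lt, e]
      exact this
    · intro h
      have e : α - β - δ/2 = (α - β) - δ/2 := by ring
      rw [gt_iff_lt, e] at h
      have := hkey.mpr h
      linarith [heq]
end

section
/- Define x̂(α, β, δ) = max{0, α − δ} if |δ − α| < |β − α|, and x̂(α, β, δ) = min{α, β} otherwise. For any α, β, δ ≥ 0 with α − β ≤ δ ≤ 1 − β and max{0, α−δ} ≤ min{α,β}, and for any x ∈ [max{0, α − δ}, min{α, β}], the entropy H(x) = −x log x − (α − x) log(α − x) − (β − x) log(β − x) − (δ − α + x) log(δ − α + x) satisfies H(x̂(α,β,δ)) ≤ H(x). -/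
/-- The minimizing choice `x̂(α, β, δ)`. -/
noncomputable def xhat (α β δ : ℝ) : ℝ :=
  if |δ - α| < |β - α| then max 0 (α - δ) else min α β

open Real Set

/-- Composition of a concave function with `x ↦ c - x`. -/
lemma concaveOn_comp_sub {F : ℝ → ℝ} (hF : ConcaveOn ℝ (Set.Ici 0) F) (c : ℝ) :
    ConcaveOn ℝ (Set.Iic c) (fun x => F (c - x)) := by
  refine ⟨convex_Iic c, ?_⟩
  intro x hx y hy a b ha hb hab
  have hx' : c - x ∈ Set.Ici (0:ℝ) := by simp at hx ⊢; linarith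
  have hy' : c - y ∈ Set.Ici (0:ℝ) := by simp at hy ⊢; linarith
  have harg : c - (a • x + b • y) = a • (c - x) + b • (c - y) := by
    simp only [smul_eq_mul]; linear_combination -c * hab
  show a • F (c - x) + b • F (c - y) ≤ F (c - (a • x + b • y))
  rw [harg]
  exact hF.2 hx' hy' ha hb hab

/-- Composition of a concave function with `x ↦ d + x`. -/
lemma concaveOn_comp_add {F : ℝ → ℝ} (hF : ConcaveOn ℝ (Set.Ici 0) F) (d : ℝ) :
    ConcaveOn ℝ (Set.Ici (-d)) (fun x => F (d + x)) := by
  refine ⟨convex_Ici _, ?_⟩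
  intro x hx y hy a b ha hb hab
  have hx' : d + x ∈ Set.Ici (0:ℝ) := by simp at hx ⊢; linarith
  have hy' : d + y ∈ Set.Ici (0:ℝ) := by simp at hy ⊢; linarith
  have harg : d + (a • x + b • y) = a • (d + x) + b • (d + y) := by
    simp only [smul_eq_mul]; linear_combination -d * hab
  show a • F (d + x) + b • F (d + y) ≤ F (d + (a • x + b • y))
  rw [harg]
  exact hF.2 hx' hy' ha hb hab

/-- Key comparison: `h(s) + h(c-s) ≤ h(t) + h(c-t)` for `s ≤ t ≤ c - s`, `s ≥ 0`. -/
lemma pair_le {c s t : ℝ} (h0 : 0 ≤ s) (hst : s ≤ t) (htc : t ≤ c - s) :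
    Real.negMulLog s + Real.negMulLog (c - s) ≤
      Real.negMulLog t + Real.negMulLog (c - t) := by
  have hcs : s ≤ c - s := le_trans hst htc
  set G : ℝ → ℝ := fun x => Real.negMulLog x + Real.negMulLog (c - x) with hG
  have hsub1 : Set.Icc s (c - s) ⊆ Set.Ici (0:ℝ) := fun y hy => le_trans h0 hy.1
  have hsub2 : Set.Icc s (c - s) ⊆ Set.Iic c := by
    intro y hy; simp only [Set.mem_Iic]; have := hy.2; linarith
  have hconc : ConcaveOn ℝ (Set.Icc s (c - s)) G := by
    have g1 : ConcaveOn ℝ (Set.Icc s (c - s)) Real.negMulLog :=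
      Real.concaveOn_negMulLog.subset hsub1 (convex_Icc _ _)
    have g2 : ConcaveOn ℝ (Set.Icc s (c - s)) (fun x => Real.negMulLog (c - x)) :=
      (concaveOn_comp_sub Real.concaveOn_negMulLog c).subset hsub2 (convex_Icc _ _)
    exact g1.add g2
  have hmem : t ∈ segment ℝ s (c - s) := by
    rw [segment_eq_Icc hcs]; exact ⟨hst, htc⟩
  have := hconc.ge_on_segment (Set.left_mem_Icc.2 hcs) (Set.right_mem_Icc.2 hcs) hmem
  have hGsym : G (c - s) = G s := by
    simp only [hG]; rw [show c - (c - s) = s by ring]; ring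
  rw [hGsym, min_self] at this
  exact this

lemma Hent_eq (α β δ x : ℝ) :
    Hent α β δ x = Real.negMulLog x + Real.negMulLog (α - x)
      + Real.negMulLog (β - x) + Real.negMulLog (δ - α + x) := by
  simp only [Hent, Real.negMulLog]; ring

/-- For admissible `(α, β, δ)` and any
`x ∈ [max {0, α−δ}, min {α, β}]`, `H(x̂(α, β, δ)) ≤ H(x)`. -/
theorem stmt10
    (α β δ : ℝ)
    (hα : α ∈ Set.Icc (0:ℝ) 1) (hβ : β ∈ Set.Icc (0:ℝ) 1) (hδ : δ ∈ Set.Icc (0:ℝ) 1)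
    (h1 : α - β ≤ δ) (h2 : δ ≤ 1 - β)
    (hint : max 0 (α - δ) ≤ min α β) :
    ∀ x ∈ Set.Icc (max 0 (α - δ)) (min α β),
      Hent α β δ (xhat α β δ) ≤ Hent α β δ x := by
  obtain ⟨hα0, hα1⟩ := hα
  obtain ⟨hβ0, hβ1⟩ := hβ
  obtain ⟨hδ0, hδ1⟩ := hδ
  intro x hx
  set a := max 0 (α - δ) with ha
  set b := min α β with hb
  have ha0 : 0 ≤ a := le_max_left _ _
  have haαδ : α - δ ≤ a := le_max_right _ _
  have hbα : b ≤ α := min_le_left _ _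
  have hbβ : b ≤ β := min_le_right _ _
  -- concavity of Hent on [a,b]
  have hconc : ConcaveOn ℝ (Set.Icc a b) (fun x => Hent α β δ x) := by
    have e : (fun x => Hent α β δ x) = fun x =>
        (Real.negMulLog x + Real.negMulLog (α - x)
          + Real.negMulLog (β - x)) + Real.negMulLog ((δ - α) + x) := by
      funext y; rw [Hent_eq]
    rw [e]
    have g1 : ConcaveOn ℝ (Set.Icc a b) Real.negMulLog :=
      Real.concaveOn_negMulLog.subset (fun y hy => le_trans ha0 hy.1) (convex_Icc _ _)
    have g2 : ConcaveOn ℝ (Set.Icc a b) (fun x => Real.negMulLog (α - x)) :=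
      (concaveOn_comp_sub Real.concaveOn_negMulLog α).subset
        (fun y hy => le_trans hy.2 hbα) (convex_Icc _ _)
    have g3 : ConcaveOn ℝ (Set.Icc a b) (fun x => Real.negMulLog (β - x)) :=
      (concaveOn_comp_sub Real.concaveOn_negMulLog β).subset
        (fun y hy => le_trans hy.2 hbβ) (convex_Icc _ _)
    have g4 : ConcaveOn ℝ (Set.Icc a b) (fun x => Real.negMulLog ((δ - α) + x)) :=
      (concaveOn_comp_add Real.concaveOn_negMulLog (δ - α)).subset
        (fun y hy => by
          have : α - δ ≤ y := le_trans haαδ hy.1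
          simp only [Set.mem_Ici]; linarith) (convex_Icc _ _)
    exact ((g1.add g2).add g3).add g4
  have hmin : min (Hent α β δ a) (Hent α β δ b) ≤ Hent α β δ x := by
    have hmem : x ∈ segment ℝ a b := by rw [segment_eq_Icc hint]; exact hx
    exact hconc.ge_on_segment (Set.left_mem_Icc.2 hint) (Set.right_mem_Icc.2 hint) hmem
  -- endpoint values
  have hαδβ : α - δ ≤ β := by linarith
  -- case analysis helper inequalities
  have key : ∀ hc : |δ - α| < |β - α| ∨ |β - α| ≤ |δ - α|,
      True := fun _ => trivial
  clear key
  -- the two endpoint comparisons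
  have cmpA : |δ - α| ≤ |β - α| → Hent α β δ a ≤ Hent α β δ b := by
    intro hc
    rcases le_total δ α with hδα | hδα <;> rcases le_total β α with hβα | hβα
    · -- δ ≤ α, β ≤ α : a = α - δ, b = β
      have haa : a = α - δ := max_eq_right (by linarith)
      have hbb : b = β := min_eq_right hβα
      have hcd : β ≤ δ := by
        rw [abs_of_nonpos (show δ - α ≤ 0 by linarith), abs_of_nonpos (show β - α ≤ 0 by linarith)] at hc; linarith
      rw [haa, hbb, Hent_eq, Hent_eq,
        show α - (α - δ) = δ by ring, show β - (α - δ) = β - α + δ by ring,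
        show δ - α + (α - δ) = (0:ℝ) by ring, show β - β = (0:ℝ) by ring,
        show δ - α + β = β - α + δ by ring, Real.negMulLog_zero]
      have := pair_le (c := α) (s := α - δ) (t := β) (by linarith) hαδβ (by linarith)
      rw [show α - (α - δ) = δ by ring] at this
      linarith
    · -- δ ≤ α ≤ β : a = α - δ, b = α
      have haa : a = α - δ := max_eq_right (by linarith)
      have hbb : b = α := min_eq_left hβα
      have hcd : α - δ ≤ β - α := by
        rw [abs_of_nonpos (show δ - α ≤ 0 by linarith), abs_of_nonneg (show (0:ℝ) ≤ β - α by linarith)] at hc; linarith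
      rw [haa, hbb, Hent_eq, Hent_eq,
        show α - (α - δ) = δ by ring, show β - (α - δ) = β - α + δ by ring,
        show δ - α + (α - δ) = (0:ℝ) by ring, show α - α = (0:ℝ) by ring,
        Real.negMulLog_zero, show δ - α + α = δ by ring]
      have := pair_le (c := β) (s := α - δ) (t := α) (by linarith) (by linarith) (by linarith)
      rw [show β - (α - δ) = β - α + δ by ring] at this
      linarith
    · -- β ≤ α ≤ δ : a = 0, b = β
      have haa : a = 0 := max_eq_left (by linarith)
      have hbb : b = β := min_eq_right hβα
      have hcd : δ - α ≤ α - β := by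
        rw [abs_of_nonneg (show (0:ℝ) ≤ δ - α by linarith), abs_of_nonpos (show β - α ≤ 0 by linarith)] at hc; linarith
      rw [haa, hbb, Hent_eq, Hent_eq, Real.negMulLog_zero,
        show α - 0 = α by ring, show β - 0 = β by ring, show δ - α + 0 = δ - α by ring,
        show β - β = (0:ℝ) by ring, Real.negMulLog_zero]
      have := pair_le (c := δ) (s := δ - α) (t := α - β) (by linarith) hcd (by linarith)
      rw [show δ - (δ - α) = α by ring, show δ - (α - β) = δ - α + β by ring] at this
      linarith
    · -- α ≤ δ, α ≤ β : a = 0, b = α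
      have haa : a = 0 := max_eq_left (by linarith)
      have hbb : b = α := min_eq_left hβα
      have hcd : δ - α ≤ β - α := by
        rw [abs_of_nonneg (show (0:ℝ) ≤ δ - α by linarith), abs_of_nonneg (show (0:ℝ) ≤ β - α by linarith)] at hc; linarith
      rw [haa, hbb, Hent_eq, Hent_eq, Real.negMulLog_zero,
        show α - 0 = α by ring, show β - 0 = β by ring, show δ - α + 0 = δ - α by ring,
        show α - α = (0:ℝ) by ring, Real.negMulLog_zero, show δ - α + α = δ by ring]
      have := pair_le (c := β + δ - α) (s := δ - α) (t := β - α)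
        (by linarith) hcd (by linarith)
      rw [show β + δ - α - (δ - α) = β by ring,
        show β + δ - α - (β - α) = δ by ring] at this
      linarith
  have cmpB : |β - α| ≤ |δ - α| → Hent α β δ b ≤ Hent α β δ a := by
    intro hc
    rcases le_total δ α with hδα | hδα <;> rcases le_total β α with hβα | hβα
    · -- δ ≤ α, β ≤ α : a = α - δ, b = β ; δ ≤ β
      have haa : a = α - δ := max_eq_right (by linarith)
      have hbb : b = β := min_eq_right hβα
      have hcd : δ ≤ β := by
        rw [abs_of_nonpos (show δ - α ≤ 0 by linarith), abs_of_nonpos (show β - α ≤ 0 by linarith)] at hc; linarith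
      rw [haa, hbb, Hent_eq, Hent_eq,
        show α - (α - δ) = δ by ring, show β - (α - δ) = β - α + δ by ring,
        show δ - α + (α - δ) = (0:ℝ) by ring, show β - β = (0:ℝ) by ring,
        show δ - α + β = β - α + δ by ring, Real.negMulLog_zero]
      have := pair_le (c := α) (s := α - β) (t := α - δ) (by linarith) (by linarith)
        (by linarith)
      rw [show α - (α - β) = β by ring, show α - (α - δ) = δ by ring] at this
      linarith
    · -- δ ≤ α ≤ β : β - α ≤ α - δ
      have haa : a = α - δ := max_eq_right (by linarith)
      have hbb : b = α := min_eq_left hβα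
      have hcd : β - α ≤ α - δ := by
        rw [abs_of_nonpos (show δ - α ≤ 0 by linarith), abs_of_nonneg (show (0:ℝ) ≤ β - α by linarith)] at hc; linarith
      rw [haa, hbb, Hent_eq, Hent_eq,
        show α - (α - δ) = δ by ring, show β - (α - δ) = β - α + δ by ring,
        show δ - α + (α - δ) = (0:ℝ) by ring, show α - α = (0:ℝ) by ring,
        Real.negMulLog_zero, show δ - α + α = δ by ring]
      have := pair_le (c := β) (s := β - α) (t := α - δ) (by linarith) hcd (by linarith)
      rw [show β - (β - α) = α by ring, show β - (α - δ) = β - α + δ by ring] at this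
      linarith
    · -- β ≤ α ≤ δ : α - β ≤ δ - α
      have haa : a = 0 := max_eq_left (by linarith)
      have hbb : b = β := min_eq_right hβα
      have hcd : α - β ≤ δ - α := by
        rw [abs_of_nonneg (show (0:ℝ) ≤ δ - α by linarith), abs_of_nonpos (show β - α ≤ 0 by linarith)] at hc; linarith
      rw [haa, hbb, Hent_eq, Hent_eq, Real.negMulLog_zero,
        show α - 0 = α by ring, show β - 0 = β by ring, show δ - α + 0 = δ - α by ring,
        show β - β = (0:ℝ) by ring, Real.negMulLog_zero]
      have := pair_le (c := δ) (s := α - β) (t := α) (by linarith) (by linarith)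
        (by linarith)
      rw [show δ - (α - β) = δ - α + β by ring] at this
      linarith
    · -- α ≤ δ, α ≤ β : β - α ≤ δ - α
      have haa : a = 0 := max_eq_left (by linarith)
      have hbb : b = α := min_eq_left hβα
      have hcd : β - α ≤ δ - α := by
        rw [abs_of_nonneg (show (0:ℝ) ≤ δ - α by linarith), abs_of_nonneg (show (0:ℝ) ≤ β - α by linarith)] at hc; linarith
      rw [haa, hbb, Hent_eq, Hent_eq, Real.negMulLog_zero,
        show α - 0 = α by ring, show β - 0 = β by ring, show δ - α + 0 = δ - α by ring,
        show α - α = (0:ℝ) by ring, Real.negMulLog_zero, show δ - α + α = δ by ring]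
      have := pair_le (c := β + δ - α) (s := β - α) (t := δ - α) (by linarith) hcd
        (by linarith)
      rw [show β + δ - α - (β - α) = δ by ring,
        show β + δ - α - (δ - α) = β by ring] at this
      linarith
  unfold xhat
  split_ifs with hcond
  · have hab := cmpA hcond.le
    rw [← ha, ← hb] at *
    calc Hent α β δ a ≤ min (Hent α β δ a) (Hent α β δ b) := le_min le_rfl hab
      _ ≤ Hent α β δ x := hmin
  · have hba := cmpB (not_lt.1 hcond)
    rw [← ha, ← hb] at *
    calc Hent α β δ b ≤ min (Hent α β δ a) (Hent α β δ b) := le_min hba le_rfl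
      _ ≤ Hent α β δ x := hmin
end

section
/- Theorem (minimal entropy extension): Let P be block probabilities of a shift-invariant probability measure on {0,1}^ℤ. For each block a of length n−1, define P̂(0a0) = x̂ₐ, P̂(0a1) = P(0a) − x̂ₐ, P̂(1a0) = P(a0) − x̂ₐ, P̂(1a1) = P(a1) − (P(0a) − x̂ₐ), where x̂ₐ = max{0, P(0a) − P(a1)} if |P(a1) − P(0a)| < |P(a0) − P(0a)| and x̂ₐ = min{P(0a), P(a0)} otherwise. Then −Σ_{b ∈ {0,1}^{n+1}} P̂(b) log P̂(b) ≤ −Σ_{b ∈ {0,1}^{n+1}} P(b) log P(b). -/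
/-- `Υ(α, β, δ)` from the minimal entropy extension. -/
noncomputable def Ups (α β δ : ℝ) : ℝ :=
  if |δ - α| < |β - α| then max 0 (α - δ) else min α β

/-- `Υ_{c,d}(α, β, δ)`: the four extended block probabilities.
Here `false` plays the role of the symbol `0` and `true` of `1`. -/
noncomputable def UpsE (c d : Bool) (α β δ : ℝ) : ℝ :=
  match c, d with
  | false, false => Ups α β δ
  | false, true  => α - Ups α β δ
  | true,  false => β - Ups α β δ
  | true,  true  => δ - α + Ups α β δ

open Real

lemma chordH (y z s t : ℝ) (hy : 0 ≤ y) (hz : 0 ≤ z) (hs : 0 ≤ s) (ht : 0 ≤ t)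
    (hst : s + t = 1) :
    s * Real.negMulLog y + t * Real.negMulLog z ≤ Real.negMulLog (s * y + t * z) := by
  simpa [smul_eq_mul] using
    Real.concaveOn_negMulLog.2 (Set.mem_Ici.mpr hy) (Set.mem_Ici.mpr hz) hs ht hst

lemma spreadH {u v u' v' : ℝ} (h0 : 0 ≤ v') (h1 : v' ≤ u) (h2 : v' ≤ v)
    (hsum : u + v = u' + v') :
    Real.negMulLog u' + Real.negMulLog v' ≤ Real.negMulLog u + Real.negMulLog v := by
  have huu' : u ≤ u' := by linarith
  rcases eq_or_lt_of_le (h1.trans huu') with he | hlt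
  · have hu : u = v' := by linarith [le_antisymm (he ▸ huu' : u ≤ v') h1]
    have hv : v = u' := by linarith
    rw [hu, hv, ← he]
  · set t := (u - v') / (u' - v') with htd
    have hd : 0 < u' - v' := by linarith
    have ht0 : 0 ≤ t := div_nonneg (by linarith) hd.le
    have ht1 : t ≤ 1 := by rw [htd, div_le_one hd]; linarith
    have hu' : 0 ≤ u' := by linarith
    have hne : u' - v' ≠ 0 := ne_of_gt hd
    have eu : t * u' + (1 - t) * v' = u := by rw [htd]; field_simp; ring
    have ev : (1 - t) * u' + t * v' = v := by
      rw [htd]; field_simp; linear_combination (v' - u') * hsum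
    have c1 := chordH u' v' t (1 - t) hu' h0 ht0 (by linarith) (by ring)
    have c2 := chordH u' v' (1 - t) t hu' h0 (by linarith) ht0 (by ring)
    rw [eu] at c1
    rw [ev] at c2
    nlinarith [c1, c2]

lemma coreH (α β δ x : ℝ) (hx : 0 ≤ x) (hxα : x ≤ α) (hxβ : x ≤ β) (hδx : α - δ ≤ x) :
    Real.negMulLog (Ups α β δ) + Real.negMulLog (α - Ups α β δ) +
      Real.negMulLog (β - Ups α β δ) + Real.negMulLog (δ - α + Ups α β δ) ≤
    Real.negMulLog x + Real.negMulLog (α - x) + Real.negMulLog (β - x) +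
      Real.negMulLog (δ - α + x) := by
  have hα : 0 ≤ α := hx.trans hxα
  have hβ : 0 ≤ β := hx.trans hxβ
  have hδ : 0 ≤ δ := by linarith
  have hfeas : α - δ ≤ β := hδx.trans hxβ
  set L := max 0 (α - δ) with hLd
  set U := min α β with hUd
  have hL0 : 0 ≤ L := le_max_left _ _
  have hLα : L ≤ α := max_le hα (by linarith)
  have hLβ : L ≤ β := max_le hβ hfeas
  have hLδ : α - δ ≤ L := le_max_right _ _
  have hUα : U ≤ α := min_le_left _ _
  have hUβ : U ≤ β := min_le_right _ _
  have hU0 : 0 ≤ U := le_min hα hβ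
  have hLx : L ≤ x := max_le hx hδx
  have hxU : x ≤ U := le_min hxα hxβ
  clear_value L U
  have hLU : L ≤ U := hLx.trans hxU
  -- endpoint comparison: condition true ⇒ f L ≤ f U
  have endLU : |δ - α| < |β - α| →
      negMulLog L + negMulLog (α - L) + negMulLog (β - L) + negMulLog (δ - α + L) ≤
        negMulLog U + negMulLog (α - U) + negMulLog (β - U) + negMulLog (δ - α + U) := by
    intro hc
    rcases le_or_gt α δ with hαδ | hαδ <;> rcases le_or_gt α β with hαβ | hαβ
    · -- α ≤ δ, α ≤ β : L = 0, U = α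
      have eL : L = 0 := by rw [hLd]; exact max_eq_left (by linarith)
      have eU : U = α := by rw [hUd]; exact min_eq_left hαβ
      rw [abs_of_nonneg (by linarith : (0:ℝ) ≤ δ - α),
          abs_of_nonneg (by linarith : (0:ℝ) ≤ β - α)] at hc
      rw [eL, eU]
      have r1 : δ - α + α = δ := by ring
      rw [r1]
      simp only [sub_zero, add_zero, sub_self, Real.negMulLog_zero]
      have s := spreadH (u := δ) (v := β - α) (u' := β) (v' := δ - α)
        (by linarith) (by linarith) (by linarith) (by ring)
      linarith
    · -- α ≤ δ, β < α : L = 0, U = β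
      have eL : L = 0 := by rw [hLd]; exact max_eq_left (by linarith)
      have eU : U = β := by rw [hUd]; exact min_eq_right hαβ.le
      rw [abs_of_nonneg (by linarith : (0:ℝ) ≤ δ - α),
          abs_of_nonpos (by linarith : β - α ≤ 0)] at hc
      rw [eL, eU]
      simp only [sub_zero, add_zero, sub_self, Real.negMulLog_zero]
      have s := spreadH (u := δ - α + β) (v := α - β) (u' := α) (v' := δ - α)
        (by linarith) (by linarith) (by linarith) (by ring)
      linarith
    · -- δ < α, α ≤ β : L = α - δ, U = α
      have eL : L = α - δ := by rw [hLd]; exact max_eq_right (by linarith)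
      have eU : U = α := by rw [hUd]; exact min_eq_left hαβ
      rw [abs_of_nonpos (by linarith : δ - α ≤ 0),
          abs_of_nonneg (by linarith : (0:ℝ) ≤ β - α)] at hc
      rw [eL, eU]
      have r1 : α - (α - δ) = δ := by ring
      have r2 : δ - α + (α - δ) = 0 := by ring
      have r3 : δ - α + α = δ := by ring
      rw [r1, r2, r3]
      simp only [sub_self, Real.negMulLog_zero]
      have s := spreadH (u := α) (v := β - α) (u' := β - (α - δ)) (v' := α - δ)
        (by linarith) (by linarith) (by linarith) (by ring)
      linarith
    · -- δ < α, β < α : L = α - δ, U = β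
      have eL : L = α - δ := by rw [hLd]; exact max_eq_right (by linarith)
      have eU : U = β := by rw [hUd]; exact min_eq_right hαβ.le
      rw [abs_of_nonpos (by linarith : δ - α ≤ 0),
          abs_of_nonpos (by linarith : β - α ≤ 0)] at hc
      rw [eL, eU]
      have r1 : α - (α - δ) = δ := by ring
      have r2 : δ - α + (α - δ) = 0 := by ring
      have r3 : β - (α - δ) = δ - α + β := by ring
      rw [r1, r2, r3]
      simp only [sub_self, Real.negMulLog_zero]
      have s := spreadH (u := β) (v := α - β) (u' := δ) (v' := α - δ)
        (by linarith) (by linarith) (by linarith) (by ring)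
      linarith
  -- endpoint comparison: condition false ⇒ f U ≤ f L
  have endUL : ¬ (|δ - α| < |β - α|) →
      negMulLog U + negMulLog (α - U) + negMulLog (β - U) + negMulLog (δ - α + U) ≤
        negMulLog L + negMulLog (α - L) + negMulLog (β - L) + negMulLog (δ - α + L) := by
    intro hc'
    have hc : |β - α| ≤ |δ - α| := not_lt.mp hc'
    rcases le_or_gt α δ with hαδ | hαδ <;> rcases le_or_gt α β with hαβ | hαβ
    · have eL : L = 0 := by rw [hLd]; exact max_eq_left (by linarith)
      have eU : U = α := by rw [hUd]; exact min_eq_left hαβ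
      rw [abs_of_nonneg (by linarith : (0:ℝ) ≤ δ - α),
          abs_of_nonneg (by linarith : (0:ℝ) ≤ β - α)] at hc
      rw [eL, eU]
      have r1 : δ - α + α = δ := by ring
      rw [r1]
      simp only [sub_zero, add_zero, sub_self, Real.negMulLog_zero]
      have s := spreadH (u := β) (v := δ - α) (u' := δ) (v' := β - α)
        (by linarith) (by linarith) (by linarith) (by ring)
      linarith
    · have eL : L = 0 := by rw [hLd]; exact max_eq_left (by linarith)
      have eU : U = β := by rw [hUd]; exact min_eq_right hαβ.le
      rw [abs_of_nonneg (by linarith : (0:ℝ) ≤ δ - α),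
          abs_of_nonpos (by linarith : β - α ≤ 0)] at hc
      rw [eL, eU]
      simp only [sub_zero, add_zero, sub_self, Real.negMulLog_zero]
      have s := spreadH (u := α) (v := δ - α) (u' := δ - α + β) (v' := α - β)
        (by linarith) (by linarith) (by linarith) (by ring)
      linarith
    · have eL : L = α - δ := by rw [hLd]; exact max_eq_right (by linarith)
      have eU : U = α := by rw [hUd]; exact min_eq_left hαβ
      rw [abs_of_nonpos (by linarith : δ - α ≤ 0),
          abs_of_nonneg (by linarith : (0:ℝ) ≤ β - α)] at hc
      rw [eL, eU]
      have r1 : α - (α - δ) = δ := by ring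
      have r2 : δ - α + (α - δ) = 0 := by ring
      have r3 : δ - α + α = δ := by ring
      rw [r1, r2, r3]
      simp only [sub_self, Real.negMulLog_zero]
      have s := spreadH (u := β - (α - δ)) (v := α - δ) (u' := α) (v' := β - α)
        (by linarith) (by linarith) (by linarith) (by ring)
      linarith
    · have eL : L = α - δ := by rw [hLd]; exact max_eq_right (by linarith)
      have eU : U = β := by rw [hUd]; exact min_eq_right hαβ.le
      rw [abs_of_nonpos (by linarith : δ - α ≤ 0),
          abs_of_nonpos (by linarith : β - α ≤ 0)] at hc
      rw [eL, eU]
      have r1 : α - (α - δ) = δ := by ring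
      have r2 : δ - α + (α - δ) = 0 := by ring
      have r3 : β - (α - δ) = δ - α + β := by ring
      rw [r1, r2, r3]
      simp only [sub_self, Real.negMulLog_zero]
      have s := spreadH (u := δ) (v := α - δ) (u' := β) (v' := α - β)
        (by linarith) (by linarith) (by linarith) (by ring)
      linarith
  -- concavity: f x is at least the min of the endpoint values
  have hminL : negMulLog L + negMulLog (α - L) + negMulLog (β - L) + negMulLog (δ - α + L) ≤
        negMulLog U + negMulLog (α - U) + negMulLog (β - U) + negMulLog (δ - α + U) →
      negMulLog L + negMulLog (α - L) + negMulLog (β - L) + negMulLog (δ - α + L) ≤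
        negMulLog x + negMulLog (α - x) + negMulLog (β - x) + negMulLog (δ - α + x) := by
    intro hLe
    rcases eq_or_lt_of_le hLU with hE | hE
    · have hxL : x = L := le_antisymm (hE ▸ hxU) hLx
      rw [hxL]
    · set t := (x - L) / (U - L) with htd
      have hd : 0 < U - L := by linarith
      have hne : U - L ≠ 0 := ne_of_gt hd
      have ht0 : 0 ≤ t := div_nonneg (by linarith) hd.le
      have ht1 : t ≤ 1 := by rw [htd, div_le_one hd]; linarith
      have key : t * (U - L) = x - L := by rw [htd]; field_simp
      have e1 : (1 - t) * L + t * U = x := by linear_combination key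
      have e2 : (1 - t) * (α - L) + t * (α - U) = α - x := by linear_combination -key
      have e3 : (1 - t) * (β - L) + t * (β - U) = β - x := by linear_combination -key
      have e4 : (1 - t) * (δ - α + L) + t * (δ - α + U) = δ - α + x := by
        linear_combination key
      have c1 := chordH L U (1 - t) t hL0 hU0 (by linarith) ht0 (by ring)
      have c2 := chordH (α - L) (α - U) (1 - t) t (by linarith) (by linarith)
        (by linarith) ht0 (by ring)
      have c3 := chordH (β - L) (β - U) (1 - t) t (by linarith) (by linarith)
        (by linarith) ht0 (by ring)
      have c4 := chordH (δ - α + L) (δ - α + U) (1 - t) t (by linarith) (by linarith)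
        (by linarith) ht0 (by ring)
      rw [e1] at c1; rw [e2] at c2; rw [e3] at c3; rw [e4] at c4
      linarith [c1, c2, c3, c4, mul_nonneg ht0 (sub_nonneg.mpr hLe)]
  have hminU : negMulLog U + negMulLog (α - U) + negMulLog (β - U) + negMulLog (δ - α + U) ≤
        negMulLog L + negMulLog (α - L) + negMulLog (β - L) + negMulLog (δ - α + L) →
      negMulLog U + negMulLog (α - U) + negMulLog (β - U) + negMulLog (δ - α + U) ≤
        negMulLog x + negMulLog (α - x) + negMulLog (β - x) + negMulLog (δ - α + x) := by
    intro hLe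
    rcases eq_or_lt_of_le hLU with hE | hE
    · have hxL : x = U := le_antisymm hxU (hE ▸ hLx)
      rw [hxL]
    · set t := (x - L) / (U - L) with htd
      have hd : 0 < U - L := by linarith
      have hne : U - L ≠ 0 := ne_of_gt hd
      have ht0 : 0 ≤ t := div_nonneg (by linarith) hd.le
      have ht1 : t ≤ 1 := by rw [htd, div_le_one hd]; linarith
      have key : t * (U - L) = x - L := by rw [htd]; field_simp
      have e1 : (1 - t) * L + t * U = x := by linear_combination key
      have e2 : (1 - t) * (α - L) + t * (α - U) = α - x := by linear_combination -key
      have e3 : (1 - t) * (β - L) + t * (β - U) = β - x := by linear_combination -key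
      have e4 : (1 - t) * (δ - α + L) + t * (δ - α + U) = δ - α + x := by
        linear_combination key
      have c1 := chordH L U (1 - t) t hL0 hU0 (by linarith) ht0 (by ring)
      have c2 := chordH (α - L) (α - U) (1 - t) t (by linarith) (by linarith)
        (by linarith) ht0 (by ring)
      have c3 := chordH (β - L) (β - U) (1 - t) t (by linarith) (by linarith)
        (by linarith) ht0 (by ring)
      have c4 := chordH (δ - α + L) (δ - α + U) (1 - t) t (by linarith) (by linarith)
        (by linarith) ht0 (by ring)
      rw [e1] at c1; rw [e2] at c2; rw [e3] at c3; rw [e4] at c4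
      linarith [c1, c2, c3, c4, mul_nonneg (by linarith : (0:ℝ) ≤ 1 - t)
        (sub_nonneg.mpr hLe)]
  by_cases hc : |δ - α| < |β - α|
  · have hu : Ups α β δ = L := by rw [Ups, if_pos hc]; exact hLd.symm
    rw [hu]
    exact hminL (endLU hc)
  · have hu : Ups α β δ = U := by rw [Ups, if_neg hc]; exact hUd.symm
    rw [hu]
    exact hminU (endUL hc)

/-- minimal entropy extension theorem: for block probabilities `P`
of a shift-invariant measure on `{0,1}^ℤ`, defining for each block `a` of
length `n−1` the probabilities `P̂(c a d) = Υ_{c,d}(P(0a), P(a0), P(a1))`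
(which is exactly `P̂(0a0) = x̂ₐ`, `P̂(0a1) = P(0a) − x̂ₐ`, `P̂(1a0) = P(a0) − x̂ₐ`,
`P̂(1a1) = P(a1) − (P(0a) − x̂ₐ)` with `x̂ₐ` from eq. (7) of the paper), the
entropy of the extended `(n+1)`-block probabilities does not exceed that of the
true ones. (`Real.log 0 = 0`, so `0 log 0 = 0` automatically.) -/
theorem stmt12
    (n : ℕ) (hn : 1 ≤ n)
    (P : List Bool → ℝ)
    (hnonneg : ∀ b, 0 ≤ P b)
    (hone : P [false] + P [true] = 1)
    (hright : ∀ b, P b = P (b ++ [false]) + P (b ++ [true]))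
    (hleft : ∀ b, P b = P (false :: b) + P (true :: b)) :
    (∑ x : Bool × (Fin (n - 1) → Bool) × Bool,
        -(UpsE x.1 x.2.2
            (P (false :: List.ofFn x.2.1))
            (P (List.ofFn x.2.1 ++ [false]))
            (P (List.ofFn x.2.1 ++ [true])) *
          Real.log (UpsE x.1 x.2.2
            (P (false :: List.ofFn x.2.1))
            (P (List.ofFn x.2.1 ++ [false]))
            (P (List.ofFn x.2.1 ++ [true])))))
      ≤ ∑ x : Bool × (Fin (n - 1) → Bool) × Bool,
          -(P (x.1 :: List.ofFn x.2.1 ++ [x.2.2]) *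
            Real.log (P (x.1 :: List.ofFn x.2.1 ++ [x.2.2]))) := by
  classical
  have reindex : ∀ g : Bool → (Fin (n - 1) → Bool) → Bool → ℝ,
      ∑ x : Bool × (Fin (n - 1) → Bool) × Bool, g x.1 x.2.1 x.2.2
        = ∑ a : Fin (n - 1) → Bool, ∑ c : Bool, ∑ d : Bool, g c a d := by
    intro g
    rw [Fintype.sum_prod_type]
    simp_rw [Fintype.sum_prod_type]
    exact Finset.sum_comm
  rw [reindex (fun c a d => -(UpsE c d
      (P (false :: List.ofFn a)) (P (List.ofFn a ++ [false])) (P (List.ofFn a ++ [true])) *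
      Real.log (UpsE c d
      (P (false :: List.ofFn a)) (P (List.ofFn a ++ [false])) (P (List.ofFn a ++ [true]))))),
    reindex (fun c a d => -(P (c :: List.ofFn a ++ [d]) *
      Real.log (P (c :: List.ofFn a ++ [d]))))]
  refine Finset.sum_le_sum fun a _ => ?_
  set A := List.ofFn a with hA
  have hr := hright (false :: A)
  have hl0 := hleft (A ++ [false])
  have hl1 := hleft (A ++ [true])
  rw [← List.cons_append, ← List.cons_append] at hl0
  rw [← List.cons_append, ← List.cons_append] at hl1
  set α := P (false :: A) with hα'
  set β := P (A ++ [false]) with hβ'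
  set δ := P (A ++ [true]) with hδ'
  set x := P ((false :: A) ++ [false]) with hx'
  have hx : 0 ≤ x := hnonneg _
  have hxα : x ≤ α := by
    have := hnonneg ((false :: A) ++ [true]); linarith
  have hxβ : x ≤ β := by
    have := hnonneg ((true :: A) ++ [false]); linarith
  have hδx : α - δ ≤ x := by
    have := hnonneg ((true :: A) ++ [true]); linarith
  have e1 : P ((false :: A) ++ [true]) = α - x := by linarith
  have e2 : P ((true :: A) ++ [false]) = β - x := by linarith
  have e3 : P ((true :: A) ++ [true]) = δ - α + x := by linarith
  have hneg : ∀ y : ℝ, -(y * Real.log y) = Real.negMulLog y := fun y => by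
    rw [Real.negMulLog, neg_mul]
  simp only [Fintype.sum_bool, UpsE, e1, e2, e3, hneg]
  have := coreH α β δ x hx hxα hxβ hδx
  linarith
end

section
/- The order-2 minimal entropy map for elementary CA rule 26 sends any consistent 2-block probability vector (Q(00), Q(01), Q(10), Q(11)) with Q(01) = Q(10) and total sum 1 to the fixed point (1, 0, 0, 0) in a single iteration. -/
/-- Order-2 minimal entropy extension to 3-blocks. -/
noncomputable def Qhat3 (Q : List Bool → ℝ) (c y d : Bool) : ℝ :=
  UpsE c d (Q [false, y]) (Q [y, false]) (Q [y, true])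

/-- Order-2 minimal entropy extension to 4-blocks. -/
noncomputable def Qhat4 (Q : List Bool → ℝ) (a₁ a₂ a₃ a₄ : Bool) : ℝ :=
  UpsE a₁ a₄ (Qhat3 Q false a₂ a₃) (Qhat3 Q a₂ a₃ false) (Qhat3 Q a₂ a₃ true)

/-- Local rule of elementary CA rule 26:
`w(1|001) = w(1|011) = w(1|100) = 1`, all other transitions yield 0. -/
def rule26 (x y z : Bool) : Bool :=
  match x, y, z with
  | false, false, true => true
  | false, true,  true => true
  | true,  false, false => true
  | _, _, _ => false

/-- Deterministic local transition probabilities of rule 26. -/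
noncomputable def w26 (b x y z : Bool) : ℝ := if b = rule26 x y z then 1 else 0

/-- The order-2 minimal entropy map for rule 26:
`Q'(b₁b₂) = Σ_{a∈{0,1}⁴} w(b₁|a₁a₂a₃) w(b₂|a₂a₃a₄) Q̂(a₁a₂a₃a₄)`. -/
noncomputable def minEntMap26 (Q : List Bool → ℝ) (b₁ b₂ : Bool) : ℝ :=
  ∑ a : Bool × Bool × Bool × Bool,
    w26 b₁ a.1 a.2.1 a.2.2.1 * w26 b₂ a.2.1 a.2.2.1 a.2.2.2 *
      Qhat4 Q a.1 a.2.1 a.2.2.1 a.2.2.2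

private lemma Ups_self (α δ : ℝ) : Ups α α δ = α := by
  unfold Ups
  rw [sub_self, abs_zero, if_neg (not_lt.mpr (abs_nonneg _)), min_self]

private lemma Ups_aba (α β : ℝ) (hm : min α β = 0) : Ups α β α = 0 := by
  unfold Ups
  rw [sub_self, abs_zero]
  split_ifs with h
  · exact max_self 0
  · exact hm

/-- The order-2 minimal entropy map for rule 26 sends any
consistent 2-block probability vector with `Q(01) = Q(10)` and total sum 1
to the fixed point `(1, 0, 0, 0)` in a single iteration. -/
theorem stmt17
    (Q : List Bool → ℝ)
    (hnonneg : ∀ b, 0 ≤ Q b)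
    (hone : Q [false] + Q [true] = 1)
    (hright : ∀ b : List Bool, b.length ≤ 1 →
      Q b = Q (b ++ [false]) + Q (b ++ [true]))
    (hleft : ∀ b : List Bool, b.length ≤ 1 →
      Q b = Q (false :: b) + Q (true :: b))
    (hsym : Q [false, true] = Q [true, false])
    (hsum : Q [false, false] + Q [false, true] + Q [true, false] +
      Q [true, true] = 1) :
    minEntMap26 Q false false = 1 ∧ minEntMap26 Q false true = 0 ∧
    minEntMap26 Q true false = 0 ∧ minEntMap26 Q true true = 0 := by
  have hb : 0 ≤ Q [false, true] := hnonneg _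
  -- 3-block extension values
  have h300 : Qhat3 Q false false false = Q [false, false] := by
    simp only [Qhat3, UpsE]; exact Ups_self _ _
  have h301 : Qhat3 Q false false true = 0 := by
    simp only [Qhat3, UpsE]; rw [Ups_self, sub_self]
  have h310 : Qhat3 Q true false false = 0 := by
    simp only [Qhat3, UpsE]; rw [Ups_self, sub_self]
  have h311 : Qhat3 Q true false true = Q [false, true] := by
    simp only [Qhat3, UpsE]; rw [Ups_self]; ring
  have h3t00 : Qhat3 Q false true false = Q [false, true] := by
    simp only [Qhat3, UpsE, ← hsym]; exact Ups_self _ _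
  have h3t01 : Qhat3 Q false true true = 0 := by
    simp only [Qhat3, UpsE, ← hsym]; rw [Ups_self, sub_self]
  have h3t10 : Qhat3 Q true true false = 0 := by
    simp only [Qhat3, UpsE, ← hsym]; rw [Ups_self, sub_self]
  have h3t11 : Qhat3 Q true true true = Q [true, true] := by
    simp only [Qhat3, UpsE, ← hsym]; rw [Ups_self]; ring
  -- 4-block extension values
  have u00 : Ups (Qhat3 Q false false false) (Qhat3 Q false false false)
      (Qhat3 Q false false true) = Q [false, false] := by
    rw [h300, Ups_self]
  have u01 : Ups (Qhat3 Q false false true) (Qhat3 Q false true false)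
      (Qhat3 Q false true true) = 0 := by
    rw [h301, h3t01]
    rw [h3t00]
    exact Ups_aba _ _ (min_eq_left hb)
  have u10 : Ups (Qhat3 Q false true false) (Qhat3 Q true false false)
      (Qhat3 Q true false true) = 0 := by
    rw [h3t00, h310, h311]
    exact Ups_aba _ _ (min_eq_right hb)
  have u11 : Ups (Qhat3 Q false true true) (Qhat3 Q true true false)
      (Qhat3 Q true true true) = 0 := by
    rw [h3t01, h3t10]; exact Ups_self _ _
  have q0000 : Qhat4 Q false false false false = Q [false, false] := by
    simp only [Qhat4, UpsE]; rw [u00]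
  have q0001 : Qhat4 Q false false false true = 0 := by
    simp only [Qhat4, UpsE]; rw [u00, h300, sub_self]
  have q1000 : Qhat4 Q true false false false = 0 := by
    simp only [Qhat4, UpsE]; rw [u00, h300, sub_self]
  have q1001 : Qhat4 Q true false false true = 0 := by
    simp only [Qhat4, UpsE]; rw [u00, h300, h301]; ring
  have q0010 : Qhat4 Q false false true false = 0 := by
    simp only [Qhat4, UpsE]; rw [u01]
  have q0011 : Qhat4 Q false false true true = 0 := by
    simp only [Qhat4, UpsE]; rw [u01, h301, sub_zero]
  have q1010 : Qhat4 Q true false true false = Q [false, true] := by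
    simp only [Qhat4, UpsE]; rw [u01, h3t00, sub_zero]
  have q1011 : Qhat4 Q true false true true = 0 := by
    simp only [Qhat4, UpsE]; rw [u01, h301, h3t01]; ring
  have q0100 : Qhat4 Q false true false false = 0 := by
    simp only [Qhat4, UpsE]; rw [u10]
  have q0101 : Qhat4 Q false true false true = Q [false, true] := by
    simp only [Qhat4, UpsE]; rw [u10, h3t00, sub_zero]
  have q1100 : Qhat4 Q true true false false = 0 := by
    simp only [Qhat4, UpsE]; rw [u10, h310, sub_zero]
  have q1101 : Qhat4 Q true true false true = 0 := by
    simp only [Qhat4, UpsE]; rw [u10, h3t00, h311]; ring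
  have q0110 : Qhat4 Q false true true false = 0 := by
    simp only [Qhat4, UpsE]; rw [u11]
  have q0111 : Qhat4 Q false true true true = 0 := by
    simp only [Qhat4, UpsE]; rw [u11, h3t01, sub_zero]
  have q1110 : Qhat4 Q true true true false = 0 := by
    simp only [Qhat4, UpsE]; rw [u11, h3t10, sub_zero]
  have q1111 : Qhat4 Q true true true true = Q [true, true] := by
    simp only [Qhat4, UpsE]; rw [u11, h3t01, h3t11]; ring
  refine ⟨?_, ?_, ?_, ?_⟩ <;>
  · simp only [minEntMap26, Fintype.sum_prod_type, Fintype.sum_bool, w26, rule26,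
      q0000, q0001, q0010, q0011, q0100, q0101, q0110, q0111,
      q1000, q1001, q1010, q1011, q1100, q1101, q1110, q1111]
    simp only [if_true, if_false]
    norm_num
    try linarith [hsum, hsym]
end

section
/- Let F be a cellular automaton of radius r and Ψ^(k) the order-k minimal entropy operator. For positive integers k, n and block b with k ≥ |b| + 2nr, F^n μ([b]) = (Ψ^(k) F Ψ^(k))^n μ([b]) for every shift-invariant measure μ. -/
/-- Action of a probabilistic cellular automaton of radius `r` with local
transition function `w` on block probabilities:
`(F P)(b) = Σ_{a ∈ {0,1}^{|b|+2r}} (Π_j w(b_j | a_j … a_{j+2r})) P(a)`. -/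
noncomputable def caStep (r : ℕ) (w : Bool → (Fin (2 * r + 1) → Bool) → ℝ)
    (P : List Bool → ℝ) : List Bool → ℝ := fun b =>
  ∑ a : Fin (b.length + 2 * r) → Bool,
    (∏ j : Fin b.length,
        w (b.get j)
          (fun i : Fin (2 * r + 1) =>
            a ⟨j.val + i.val, by have := j.isLt; have := i.isLt; omega⟩)) *
      P (List.ofFn a)

lemma caStep_congr (r : ℕ) (w : Bool → (Fin (2 * r + 1) → Bool) → ℝ)
    (Q1 Q2 : List Bool → ℝ) (b : List Bool)
    (h : ∀ a : List Bool, a.length = b.length + 2 * r → Q1 a = Q2 a) :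
    caStep r w Q1 b = caStep r w Q2 b := by
  unfold caStep
  refine Finset.sum_congr rfl fun a _ => ?_
  rw [h (List.ofFn a) (by simp)]

/-- Let `F` be a CA of radius `r` and `Ψ = Ψ^(k)` the order-`k`
minimal entropy operator (preserving probabilities of all blocks of length
≤ `k`). For positive integers `k`, `n` and block `b` with `k ≥ |b| + 2nr`,
`(F^n P)(b) = ((Ψ ∘ F ∘ Ψ)^n P)(b)` for every shift-invariant measure given
by block probabilities `P`. -/
theorem stmt19
    (r k n : ℕ) (hk : 0 < k) (hn : 0 < n)
    (w : Bool → (Fin (2 * r + 1) → Bool) → ℝ)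
    (hw0 : ∀ b c, 0 ≤ w b c)
    (hw1 : ∀ c, w false c + w true c = 1)
    (Psi : (List Bool → ℝ) → (List Bool → ℝ))
    (hPsi : ∀ Q : List Bool → ℝ, ∀ a : List Bool, a.length ≤ k → Psi Q a = Q a)
    (P : List Bool → ℝ)
    (hnonneg : ∀ b, 0 ≤ P b)
    (hone : P [false] + P [true] = 1)
    (hright : ∀ b, P b = P (b ++ [false]) + P (b ++ [true]))
    (hleft : ∀ b, P b = P (false :: b) + P (true :: b)) :
    ∀ b : List Bool, b.length + 2 * n * r ≤ k →
      (caStep r w)^[n] P b = (fun Q => Psi (caStep r w (Psi Q)))^[n] P b := by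
  clear hn hk
  induction n with
  | zero => intro b _; rfl
  | succ n ih =>
      intro b hb
      rw [Function.iterate_succ_apply', Function.iterate_succ_apply']
      have hbk : b.length ≤ k := by omega
      rw [hPsi _ b hbk]
      have e1 : caStep r w (Psi ((fun Q => Psi (caStep r w (Psi Q)))^[n] P)) b
          = caStep r w ((fun Q => Psi (caStep r w (Psi Q)))^[n] P) b :=
        caStep_congr r w _ _ b fun a ha => hPsi _ a (by nlinarith [ha, hb])
      have e2 : caStep r w ((fun Q => Psi (caStep r w (Psi Q)))^[n] P) b
          = caStep r w ((caStep r w)^[n] P) b :=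
        caStep_congr r w _ _ b fun a ha => (ih a (by nlinarith [ha])).symm
      exact (e1.trans e2).symm
end
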